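/- arXiv:0910.4675 — 2 statements merged into one kernel-verified Lean document; each statement's English description precedes it below -/
import Mathlib

section
/- Let x_1,...,x_n be variables and for α ∈ ℤ^n write x^α = x_1^{α_1}···x_n^{α_n}. Let α_1,...,α_k ∈ ℤ^n with ∑_i α_i ≠ 0. Then, as rational functions, ∏_{i=1}^k 1/(1-x^{α_i}) = (1/(1-x^{∑α_i})) · ∑_{j=1}^k [ (x^{α_1}···x^{α_{j-1}}) / ((1-x^{α_1})···(1-x^{α_{j-1}})) · 1/((1-x^{α_{j+1}})···(1-x^{α_k})) ]. -/
open Finset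

/-- The field of rational functions `ℚ(x₁, ..., xₙ)`. -/
noncomputable abbrev RatFn (n : ℕ) : Type := FractionRing (MvPolynomial (Fin n) ℚ)

/-- The Laurent monomial `x^α = x₁^{α₁} ⋯ xₙ^{αₙ}` for `α ∈ ℤⁿ`. -/
noncomputable def xm {n : ℕ} (α : Fin n → ℤ) : RatFn n :=
  ∏ i, (algebraMap (MvPolynomial (Fin n) ℚ) (RatFn n) (MvPolynomial.X i)) ^ (α i)


lemma zpow_finset_sum {G : Type*} [CommGroupWithZero G] {x : G} (hx : x ≠ 0)
    {ι : Type*} (s : Finset ι) (f : ι → ℤ) :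
    x ^ (∑ i ∈ s, f i) = ∏ i ∈ s, x ^ f i := by
  classical
  induction s using Finset.induction_on with
  | empty => simp
  | @insert a s ha ih => rw [Finset.sum_insert ha, Finset.prod_insert ha,
      zpow_add₀ hx, ih]

lemma xm_sum {n k : ℕ} (α : Fin k → Fin n → ℤ) :
    xm (∑ i, α i) = ∏ i, xm (α i) := by
  unfold xm
  rw [Finset.prod_comm]
  refine Finset.prod_congr rfl fun q _ => ?_
  have hx : (algebraMap (MvPolynomial (Fin n) ℚ) (RatFn n) (MvPolynomial.X q)) ≠ 0 := by
    simp only [ne_eq, map_eq_zero_iff _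
      (IsFractionRing.injective (MvPolynomial (Fin n) ℚ) (RatFn n))]
    exact MvPolynomial.X_ne_zero q
  have : (∑ i, α i) q = ∑ i, α i q := by simp
  rw [this, zpow_finset_sum hx]

-- telescoping
lemma telescope {F : Type*} [CommRing F] (a : ℕ → F) (k : ℕ) :
    ∑ j ∈ range k, (∏ i ∈ range j, a i) * (1 - a j) = 1 - ∏ i ∈ range k, a i := by
  induction k with
  | zero => simp
  | succ k ih => rw [Finset.sum_range_succ, Finset.prod_range_succ, ih]; ring

lemma aux_nat {F : Type*} [Field F] (a : ℕ → F) (k : ℕ)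
    (h : ∀ m ∈ range k, (1 : F) - a m ≠ 0) :
    (∑ j ∈ range k, (∏ i ∈ range j, a i * (1 - a i)⁻¹) *
      ∏ i ∈ Ico (j + 1) k, (1 - a i)⁻¹) * ∏ i ∈ range k, (1 - a i)
      = 1 - ∏ i ∈ range k, a i := by
  rw [Finset.sum_mul]
  rw [show ∑ j ∈ range k, ((∏ i ∈ range j, a i * (1 - a i)⁻¹) *
      ∏ i ∈ Ico (j + 1) k, (1 - a i)⁻¹) * ∏ i ∈ range k, (1 - a i)
      = ∑ j ∈ range k, (∏ i ∈ range j, a i) * (1 - a j) from ?_, telescope]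
  refine Finset.sum_congr rfl fun j hj => ?_
  have hjk : j < k := Finset.mem_range.mp hj
  have h1 : (∏ i ∈ range j, (1 - a i)) ≠ 0 :=
    Finset.prod_ne_zero_iff.mpr fun i hi => h i (Finset.mem_range.mpr ((Finset.mem_range.mp hi).trans hjk))
  have h2 : (∏ i ∈ Ico (j + 1) k, (1 - a i)) ≠ 0 :=
    Finset.prod_ne_zero_iff.mpr fun i hi => h i (Finset.mem_range.mpr (Finset.mem_Ico.mp hi).2)
  rw [← Finset.prod_range_mul_prod_Ico (fun i => 1 - a i) (Nat.succ_le_of_lt hjk),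
    Finset.prod_range_succ, Finset.prod_mul_distrib, Finset.prod_inv_distrib,
    Finset.prod_inv_distrib]
  field_simp

-- conversions Fin ↔ ℕ
lemma filt_lt {F : Type*} [CommMonoid F] {k : ℕ} (f : Fin k → F) (g : ℕ → F)
    (hg : ∀ i : Fin k, g i = f i) (j : Fin k) :
    ∏ i ∈ Finset.univ.filter (fun i => i < j), f i = ∏ m ∈ range j.val, g m := by
  rw [show (range j.val) = (Finset.univ.filter (fun i : Fin k => i < j)).image Fin.val from ?_,
    Finset.prod_image (fun a _ b _ h => Fin.val_injective h)]
  · exact (Finset.prod_congr rfl fun i _ => hg i).symm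
  · ext m
    simp only [Finset.mem_range, Finset.mem_image, Finset.mem_filter, Finset.mem_univ, true_and,
      Fin.lt_def]
    constructor
    · intro hm
      exact ⟨⟨m, hm.trans j.isLt⟩, hm, rfl⟩
    · rintro ⟨i, hi, rfl⟩; exact hi

lemma filt_gt {F : Type*} [CommMonoid F] {k : ℕ} (f : Fin k → F) (g : ℕ → F)
    (hg : ∀ i : Fin k, g i = f i) (j : Fin k) :
    ∏ i ∈ Finset.univ.filter (fun i => j < i), f i = ∏ m ∈ Ico (j.val + 1) k, g m := by
  rw [show (Ico (j.val + 1) k) = (Finset.univ.filter (fun i : Fin k => j < i)).image Fin.val from ?_,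
    Finset.prod_image (fun a _ b _ h => Fin.val_injective h)]
  · exact (Finset.prod_congr rfl fun i _ => hg i).symm
  · ext m
    simp only [Finset.mem_Ico, Finset.mem_image, Finset.mem_filter, Finset.mem_univ, true_and,
      Fin.lt_def]
    constructor
    · rintro ⟨h1, h2⟩
      exact ⟨⟨m, h2⟩, Nat.lt_of_succ_le h1, rfl⟩
    · rintro ⟨i, hi, rfl⟩; exact ⟨Nat.succ_le_of_lt hi, i.isLt⟩

/-- The Szenes–Vergne formula. -/
theorem szenes_vergne (n k : ℕ) (α : Fin k → Fin n → ℤ)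
    (hα : ∀ i, α i ≠ 0) (hS : (∑ i, α i) ≠ 0)
    (hne : ∀ i, (1 : RatFn n) - xm (α i) ≠ 0)
    (hsum : (1 : RatFn n) - xm (∑ i, α i) ≠ 0) :
    ∏ i, ((1 : RatFn n) - xm (α i))⁻¹ =
      ((1 : RatFn n) - xm (∑ i, α i))⁻¹ *
        ∑ j, (∏ i ∈ Finset.univ.filter (fun i => i < j),
                xm (α i) * ((1 : RatFn n) - xm (α i))⁻¹) *
             (∏ i ∈ Finset.univ.filter (fun i => j < i),
                ((1 : RatFn n) - xm (α i))⁻¹) := by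
  classical
  set g : ℕ → RatFn n := fun m => if h : m < k then xm (α ⟨m, h⟩) else 0 with hgdef
  have hg : ∀ i : Fin k, g i = xm (α i) := fun i => by
    simp [hgdef, i.isLt]
  have hP : xm (∑ i, α i) = ∏ m ∈ range k, g m := by
    rw [xm_sum, ← Fin.prod_univ_eq_prod_range g k]
    exact Finset.prod_congr rfl fun i _ => (hg i).symm
  have hgne : ∀ m ∈ range k, (1 : RatFn n) - g m ≠ 0 := by
    intro m hm
    have hmk := Finset.mem_range.mp hm
    rw [show g m = xm (α ⟨m, hmk⟩) from by simp [hgdef, hmk]]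
    exact hne ⟨m, hmk⟩
  have hD : (∏ m ∈ range k, ((1 : RatFn n) - g m)) ≠ 0 :=
    Finset.prod_ne_zero_iff.mpr hgne
  -- rewrite LHS
  have hL : ∏ i, ((1 : RatFn n) - xm (α i))⁻¹
      = ∏ m ∈ range k, ((1 : RatFn n) - g m)⁻¹ := by
    rw [← Fin.prod_univ_eq_prod_range (fun m => (1 - g m)⁻¹) k]
    exact Finset.prod_congr rfl fun i _ => by rw [hg i]
  -- rewrite sum
  have hR : (∑ j : Fin k, (∏ i ∈ Finset.univ.filter (fun i => i < j),
                xm (α i) * ((1 : RatFn n) - xm (α i))⁻¹) *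
             (∏ i ∈ Finset.univ.filter (fun i => j < i),
                ((1 : RatFn n) - xm (α i))⁻¹))
      = ∑ j ∈ range k, (∏ i ∈ range j, g i * (1 - g i)⁻¹) *
          ∏ i ∈ Ico (j + 1) k, (1 - g i)⁻¹ := by
    rw [← Fin.sum_univ_eq_sum_range (fun j => (∏ i ∈ range j, g i * (1 - g i)⁻¹) *
          ∏ i ∈ Ico (j + 1) k, (1 - g i)⁻¹) k]
    refine Finset.sum_congr rfl fun j _ => ?_
    rw [filt_lt _ (fun m => g m * (1 - g m)⁻¹) (fun i => by simp only [hg i]) j,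
      filt_gt _ (fun m => (1 - g m)⁻¹) (fun i => by simp only [hg i]) j]
  rw [hL, hR, hP]
  have key := aux_nat g k hgne
  have hsum' : (1 : RatFn n) - ∏ m ∈ range k, g m ≠ 0 := by rw [← hP]; exact hsum
  have hSne : (∑ j ∈ range k, (∏ i ∈ range j, g i * (1 - g i)⁻¹) *
      ∏ i ∈ Ico (j + 1) k, (1 - g i)⁻¹) ≠ 0 := by
    intro h0
    rw [h0, zero_mul] at key
    exact hsum' key.symm
  rw [← key, mul_inv, Finset.prod_inv_distrib, mul_comm (_)⁻¹ (_)⁻¹, mul_assoc,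
    inv_mul_cancel₀ hSne, mul_one]
end

section
/- Let α, β ∈ ℤ^n be nonzero with α ≠ 2β. Then 1/((1-x^α)(1-x^β)) = (1/(1-x^{α-2β})) · ( 1/(1-x^β) - (x^{α-β} + x^{α-2β})/(1-x^α) ) as rational functions. -/
open Finset

lemma X_ne_zero {n : ℕ} (i : Fin n) :
    (algebraMap (MvPolynomial (Fin n) ℚ) (RatFn n) (MvPolynomial.X i)) ≠ 0 := by
  intro h
  have := (IsFractionRing.injective (MvPolynomial (Fin n) ℚ) (RatFn n))
  have hx : (MvPolynomial.X i : MvPolynomial (Fin n) ℚ) = 0 := by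
    apply this
    simpa using h
  exact MvPolynomial.X_ne_zero i hx

lemma xm_add {n : ℕ} (α β : Fin n → ℤ) : xm (α + β) = xm α * xm β := by
  unfold xm
  rw [← Finset.prod_mul_distrib]
  refine Finset.prod_congr rfl fun i _ => ?_
  exact zpow_add₀ (X_ne_zero i) (α i) (β i)

lemma xm_ne_zero {n : ℕ} (α : Fin n → ℤ) : xm α ≠ 0 := by
  unfold xm
  exact Finset.prod_ne_zero_iff.mpr fun i _ => zpow_ne_zero _ (X_ne_zero i)

/-- Lemma (d), second formula. -/
theorem two_factor_decomposition' (n : ℕ) (α β : Fin n → ℤ)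
    (hα : α ≠ 0) (hβ : β ≠ 0) (hαβ : α ≠ (2 : ℤ) • β)
    (h1 : (1 : RatFn n) - xm α ≠ 0) (h2 : (1 : RatFn n) - xm β ≠ 0)
    (h3 : (1 : RatFn n) - xm (α - (2 : ℤ) • β) ≠ 0) :
    (((1 : RatFn n) - xm α) * ((1 : RatFn n) - xm β))⁻¹ =
      ((1 : RatFn n) - xm (α - (2 : ℤ) • β))⁻¹ *
        (((1 : RatFn n) - xm β)⁻¹ -
          (xm (α - β) + xm (α - (2 : ℤ) • β)) * ((1 : RatFn n) - xm α)⁻¹) := by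
  have hb := xm_ne_zero β
  have key : xm α = xm (α - β) * xm β := by
    rw [← xm_add]; ring_nf
  have key2 : xm (α - β) = xm (α - (2 : ℤ) • β) * xm β := by
    rw [← xm_add]
    congr 1
    funext i
    simp [two_smul]
    ring
  rw [key, key2]
  set a := xm (α - (2 : ℤ) • β) with ha
  set b := xm β with hbb
  rw [key, key2] at h1
  have h1' : (1 : RatFn n) - a * b ^ 2 ≠ 0 := by rwa [sq, ← mul_assoc]
  field_simp
  ring
end
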